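/- arXiv:1705.01069 — 3 statements merged into one kernel-verified Lean document; each statement's English description precedes it below -/
import Mathlib

section
/- With the notation of the fractional linear example: for all x ∈ ℝ, the denominator D(x) := G(x) − G(x+z₀) + (e^{z₀}−1) G'(x) + z₀² has a strictly positive lower bound. In particular: for x < γ₁, D(x) = (e^{z₀}−1−z₀)(α+2βγ₁) + z₀² > βz₀² > 0; for x > γ₂ − z₀, D(x) = (e^{z₀}−1−z₀) G'(γ₂) + z₀² > βz₀²; for x ∈ (γ₁, γ₂), D(x) ≥ (1−β)z₀² + (α+2βγ₁)(e^{z₀}−1−z₀) > 0; and for x ∈ (γ₂, γ₂ − z₀), D(x) ≥ (e^{z₀}−1−z₀)G'(γ₂) + (1−β)z₀² > 0. -/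
lemma sqmax_hasDerivAt (y : ℝ) : HasDerivAt (fun t : ℝ => max t 0 ^ 2) (2 * max y 0) y := by
  rcases lt_trichotomy y 0 with hy | hy | hy
  · have h0 : HasDerivAt (fun _ : ℝ => (0:ℝ)) 0 y := hasDerivAt_const y 0
    have heq : (fun t : ℝ => max t 0 ^ 2) =ᶠ[nhds y] (fun _ : ℝ => (0:ℝ)) := by
      filter_upwards [Iio_mem_nhds hy] with t ht
      rw [max_eq_right (le_of_lt ht)]; ring
    have h1 := h0.congr_of_eventuallyEq heq
    simpa [max_eq_right hy.le] using h1
  · subst hy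
    rw [hasDerivAt_iff_tendsto_slope]
    have hb : ∀ t : ℝ, ‖slope (fun t : ℝ => max t 0 ^ 2) 0 t‖ ≤ |t| := by
      intro t
      rcases le_or_gt t 0 with ht | ht
      · simp [slope_def_field, max_eq_right ht]
      · rw [slope_def_field, max_eq_left ht.le]
        have h2 : ((t:ℝ) ^ 2 - max 0 0 ^ 2) / (t - 0) = t := by
          simp only [max_self]
          field_simp
          ring
        rw [h2]; simp [abs_of_pos ht]
    have htend : Filter.Tendsto (fun t : ℝ => |t|) (nhdsWithin 0 {(0:ℝ)}ᶜ) (nhds 0) := by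
      have h3 : Filter.Tendsto (fun t : ℝ => |t|) (nhds 0) (nhds 0) := by
        simpa using continuous_abs.tendsto (0:ℝ)
      exact h3.mono_left nhdsWithin_le_nhds
    have := squeeze_zero_norm hb htend
    simpa using this
  · have hp : HasDerivAt (fun t : ℝ => t ^ 2) (2 * y ^ 1) y := by
      simpa using hasDerivAt_pow 2 y
    have heq : (fun t : ℝ => max t 0 ^ 2) =ᶠ[nhds y] (fun t : ℝ => t ^ 2) := by
      filter_upwards [Ioi_mem_nhds hy] with t ht
      rw [max_eq_left (le_of_lt ht)]
    have h1 := hp.congr_of_eventuallyEq heq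
    simpa [max_eq_left hy.le] using h1

set_option maxHeartbeats 1600000 in
theorem fractional_linear_denominator_lower_bound (z₀ α β γ₀ γ₁ γ₂ γ₃ : ℝ)
    (hz₀ : z₀ < 0)
    (hβ0 : 0 < β) (hβ1 : β < 1 - 2 * (Real.exp z₀ - z₀ - 1) / z₀ ^ 2)
    (hγ₃ : γ₃ = -α / (2 * β) - 1 / β)
    (hγ₀ : γ₀ = -α / (2 * β) + z₀ ^ 2 * (1 - 1 / β) / (2 * (Real.exp z₀ - z₀ - 1)))
    (h01 : γ₀ < γ₁) (h12 : γ₁ < γ₂) (h23 : γ₂ < γ₃)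
    (G : ℝ → ℝ)
    (hG : ∀ x, G x =
      if x < γ₁ then α * γ₁ + β * γ₁ ^ 2 + (x - γ₁) * (α + 2 * β * γ₁)
      else if x ≤ γ₂ then α * x + β * x ^ 2
      else α * γ₂ + β * γ₂ ^ 2 + (x - γ₂) * (α + 2 * β * γ₂))
    (D : ℝ → ℝ)
    (hD : ∀ x, D x = G x - G (x + z₀) + (Real.exp z₀ - 1) * deriv G x + z₀ ^ 2) :
    (∃ ε : ℝ, 0 < ε ∧ ∀ x : ℝ, ε ≤ D x) ∧
      (∀ x < γ₁, D x = (Real.exp z₀ - 1 - z₀) * (α + 2 * β * γ₁) + z₀ ^ 2 ∧ β * z₀ ^ 2 < D x) ∧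
      (∀ x > γ₂ - z₀, D x = (Real.exp z₀ - 1 - z₀) * deriv G γ₂ + z₀ ^ 2 ∧ β * z₀ ^ 2 < D x) ∧
      (∀ x ∈ Set.Ioo γ₁ γ₂,
        (1 - β) * z₀ ^ 2 + (α + 2 * β * γ₁) * (Real.exp z₀ - 1 - z₀) ≤ D x ∧
          0 < (1 - β) * z₀ ^ 2 + (α + 2 * β * γ₁) * (Real.exp z₀ - 1 - z₀)) ∧
      (∀ x ∈ Set.Ioo γ₂ (γ₂ - z₀),
        (Real.exp z₀ - 1 - z₀) * deriv G γ₂ + (1 - β) * z₀ ^ 2 ≤ D x ∧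
          0 < (Real.exp z₀ - 1 - z₀) * deriv G γ₂ + (1 - β) * z₀ ^ 2) := by
  have hz0 : z₀ ≠ 0 := ne_of_lt hz₀
  set K := Real.exp z₀ with hKdef
  have hK1 : z₀ + 1 < K := Real.add_one_lt_exp hz0
  have hKlt : K < 1 := Real.exp_lt_one_iff.mpr hz₀
  have hE : 0 < K - z₀ - 1 := by linarith
  have hz2 : 0 < z₀ ^ 2 := by positivity
  -- 2E < (1-β) z₀²
  have hβ1' : 2 * (K - z₀ - 1) < (1 - β) * z₀ ^ 2 := by
    have h : 2 * (K - z₀ - 1) / z₀ ^ 2 < 1 - β := by linarith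
    calc 2 * (K - z₀ - 1) = 2 * (K - z₀ - 1) / z₀ ^ 2 * z₀ ^ 2 := by field_simp
    _ < (1 - β) * z₀ ^ 2 := by nlinarith
  -- key equality at γ₀
  have hkey : (K - z₀ - 1) * (α + 2 * β * γ₀) = (β - 1) * z₀ ^ 2 := by
    rw [hγ₀]
    field_simp
    ring
  have hs1 : (β - 1) * z₀ ^ 2 < (K - z₀ - 1) * (α + 2 * β * γ₁) := by
    rw [← hkey]
    nlinarith [mul_pos hE hβ0]
  have hs2eq : α + 2 * β * γ₃ = -2 := by
    rw [hγ₃]; field_simp; ring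
  have hs2 : α + 2 * β * γ₂ < -2 := by nlinarith
  have hs12 : α + 2 * β * γ₁ < α + 2 * β * γ₂ := by nlinarith
  -- representation of G
  have Grep : G = fun x => α * x + β * x ^ 2 - β * (max (γ₁ - x) 0) ^ 2
      - β * (max (x - γ₂) 0) ^ 2 := by
    funext x
    rw [hG x]
    split_ifs with h1 h2
    · rw [max_eq_left (by linarith), max_eq_right (by linarith)]
      ring
    · rw [max_eq_right (by linarith), max_eq_right (by linarith)]
      ring
    · rw [max_eq_right (by linarith), max_eq_left (by push_neg at h2; linarith)]
      ring
  -- derivative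
  have hG' : ∀ x, HasDerivAt G
      (α + 2 * β * x + 2 * β * max (γ₁ - x) 0 - 2 * β * max (x - γ₂) 0) x := by
    intro x
    have h1 : HasDerivAt (fun x : ℝ => max (γ₁ - x) 0 ^ 2) (2 * max (γ₁ - x) 0 * (-1)) x := by
      exact (sqmax_hasDerivAt (γ₁ - x)).comp x ((hasDerivAt_id x).const_sub γ₁)
    have h2 : HasDerivAt (fun x : ℝ => max (x - γ₂) 0 ^ 2) (2 * max (x - γ₂) 0 * 1) x := by
      exact (sqmax_hasDerivAt (x - γ₂)).comp x ((hasDerivAt_id x).sub_const γ₂)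
    have h3 : HasDerivAt (fun x : ℝ => α * x + β * x ^ 2 - β * max (γ₁ - x) 0 ^ 2
        - β * max (x - γ₂) 0 ^ 2)
        (α + 2 * β * x + 2 * β * max (γ₁ - x) 0 - 2 * β * max (x - γ₂) 0) x := by
      have ha : HasDerivAt (fun x : ℝ => α * x) α x := by
        simpa using (hasDerivAt_id x).const_mul α
      have hb : HasDerivAt (fun x : ℝ => β * x ^ 2) (β * (2 * x ^ 1)) x := by
        exact (by simpa using hasDerivAt_pow 2 x : HasDerivAt (fun x : ℝ => x ^ 2) (2 * x ^ 1) x).const_mul β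
      have := ((ha.add hb).sub (h1.const_mul β)).sub (h2.const_mul β)
      exact this.congr_deriv (by ring)
    rw [Grep]
    exact h3
  have hderiv : ∀ x, deriv G x
      = α + 2 * β * x + 2 * β * max (γ₁ - x) 0 - 2 * β * max (x - γ₂) 0 :=
    fun x => (hG' x).deriv
  have hdγ₂ : deriv G γ₂ = α + 2 * β * γ₂ := by
    rw [hderiv γ₂, max_eq_right (by linarith), max_eq_right (by linarith)]
    ring
  -- master lower bound
  have hDle : ∀ x, (1 - β) * z₀ ^ 2 + (α + 2 * β * γ₁) * (K - 1 - z₀) ≤ D x := by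
    intro x
    rw [hD x, hG x, hG (x + z₀), hderiv x]
    rcases lt_or_ge x γ₁ with hx1 | hx1
    · -- LL
      rw [if_pos hx1, if_pos (show x + z₀ < γ₁ by linarith),
        max_eq_left (by linarith : (0:ℝ) ≤ γ₁ - x), max_eq_right (by linarith : x - γ₂ ≤ 0)]
      nlinarith [mul_pos hβ0 hz2]
    · rw [if_neg (not_lt.mpr hx1)]
      rcases le_or_gt x γ₂ with hx2 | hx2
      · -- M
        rw [if_pos hx2, max_eq_right (by linarith : γ₁ - x ≤ 0),
          max_eq_right (by linarith : x - γ₂ ≤ 0)]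
        rcases lt_or_ge (x + z₀) γ₁ with hy1 | hy1
        · -- ML
          rw [if_pos hy1]
          nlinarith [mul_nonneg hβ0.le (sq_nonneg (x - γ₁ + K - 1)),
            mul_pos (mul_pos hβ0 hE) (by linarith : (0:ℝ) < -z₀ - (K - 1))]
        · -- MM
          rw [if_neg (not_lt.mpr hy1), if_pos (by linarith : x + z₀ ≤ γ₂)]
          nlinarith [mul_nonneg (mul_nonneg hE.le hβ0.le) (by linarith : (0:ℝ) ≤ x - γ₁)]
      · -- R
        rw [if_neg (not_le.mpr hx2), max_eq_right (by linarith : γ₁ - x ≤ 0),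
          max_eq_left (by linarith : (0:ℝ) ≤ x - γ₂)]
        rcases lt_or_ge (x + z₀) γ₁ with hy1 | hy1
        · -- RL
          rw [if_pos hy1]
          rcases le_or_gt (x - γ₂ + K - 1) 0 with hm | hm
          · nlinarith [mul_nonneg hβ0.le (sq_nonneg (x - γ₁ + K - 1)),
              mul_pos (mul_pos hβ0 (by linarith : (0:ℝ) < x - γ₂ + K - 1 - z₀))
                (by linarith : (0:ℝ) < -z₀ - (x - γ₂ + K - 1))]
          · nlinarith [mul_pos (mul_pos hβ0 (by linarith : (0:ℝ) < γ₂ - γ₁))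
                (by linarith : (0:ℝ) < γ₂ - γ₁ + 2 * (x - γ₂ + K - 1)),
              mul_pos hβ0 hz2]
        · rw [if_neg (not_lt.mpr hy1)]
          rcases le_or_gt (x + z₀) γ₂ with hy2 | hy2
          · -- RM
            rw [if_pos hy2]
            nlinarith [mul_pos (mul_pos hβ0 (by linarith : (0:ℝ) < x - γ₂))
                (by linarith : (0:ℝ) < γ₂ - x - 2 * z₀),
              mul_pos (mul_pos hE hβ0) (by linarith : (0:ℝ) < γ₂ - γ₁)]
          · -- RR
            rw [if_neg (not_le.mpr hy2)]
            nlinarith [mul_pos (mul_pos hE hβ0) (by linarith : (0:ℝ) < γ₂ - γ₁),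
              mul_pos hβ0 hz2]
  have hs1' : (β - 1) * z₀ ^ 2 < (α + 2 * β * γ₁) * (K - 1 - z₀) := by nlinarith [hs1]
  have hs2' : (β - 1) * z₀ ^ 2 < (K - 1 - z₀) * (α + 2 * β * γ₂) := by
    nlinarith [hs1, mul_pos (mul_pos hE hβ0) (by linarith : (0:ℝ) < γ₂ - γ₁)]
  refine ⟨⟨(1 - β) * z₀ ^ 2 + (α + 2 * β * γ₁) * (K - 1 - z₀), by linarith, hDle⟩, ?_, ?_, ?_, ?_⟩
  · -- x < γ₁
    intro x hx
    have hxeq : D x = (K - 1 - z₀) * (α + 2 * β * γ₁) + z₀ ^ 2 := by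
      rw [hD x, hG x, hG (x + z₀), hderiv x, if_pos hx, if_pos (show x + z₀ < γ₁ by linarith),
        max_eq_left (by linarith : (0:ℝ) ≤ γ₁ - x), max_eq_right (by linarith : x - γ₂ ≤ 0)]
      ring
    exact ⟨hxeq, by rw [hxeq]; nlinarith [hs1]⟩
  · -- x > γ₂ - z₀
    intro x hx
    rw [hdγ₂]
    have hx2 : γ₂ < x := by linarith
    have hxeq : D x = (K - 1 - z₀) * (α + 2 * β * γ₂) + z₀ ^ 2 := by
      rw [hD x, hG x, hG (x + z₀), hderiv x, if_neg (not_lt.mpr (by linarith : γ₁ ≤ x)),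
        if_neg (not_le.mpr hx2), if_neg (not_lt.mpr (by linarith : γ₁ ≤ x + z₀)),
        if_neg (not_le.mpr (by linarith : γ₂ < x + z₀)),
        max_eq_right (by linarith : γ₁ - x ≤ 0), max_eq_left (by linarith : (0:ℝ) ≤ x - γ₂)]
      ring
    exact ⟨hxeq, by rw [hxeq]; nlinarith [hs2']⟩
  · -- Ioo γ₁ γ₂
    intro x _
    exact ⟨hDle x, by linarith⟩
  · -- Ioo γ₂ (γ₂ - z₀)
    rintro x ⟨hxa, hxb⟩
    rw [hdγ₂]
    constructor
    · rw [hD x, hG x, hG (x + z₀), hderiv x, if_neg (not_lt.mpr (by linarith : γ₁ ≤ x)),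
        if_neg (not_le.mpr hxa), max_eq_right (by linarith : γ₁ - x ≤ 0),
        max_eq_left (by linarith : (0:ℝ) ≤ x - γ₂)]
      rcases lt_or_ge (x + z₀) γ₁ with hy1 | hy1
      · rw [if_pos hy1]
        nlinarith [mul_nonneg hβ0.le (sq_nonneg (γ₂ - γ₁ + z₀)),
          mul_pos (mul_pos hβ0 (by linarith : (0:ℝ) < γ₂ - γ₁)) (by linarith : (0:ℝ) < x - γ₂)]
      · rw [if_neg (not_lt.mpr hy1), if_pos (by linarith : x + z₀ ≤ γ₂)]
        nlinarith [mul_pos (mul_pos hβ0 (by linarith : (0:ℝ) < x - γ₂))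
          (by linarith : (0:ℝ) < γ₂ - x - 2 * z₀)]
    · nlinarith [hs2']
end

section
/- With G and c defined as in the fractional linear example—c(x) = (a²(x)/2) · (G''(x) − G'(x) − 2) / (G(x) − G(x+z₀) + (e^{z₀}−1)G'(x) + z₀²) for a positive bounded Borel function a—the function c is positive and bounded. -/
open Filter

lemma relu_sq_hasDerivAt (x : ℝ) : HasDerivAt (fun y : ℝ => max y 0 ^ 2) (2 * max x 0) x := by
  rcases lt_trichotomy x 0 with h | h | h
  · have hev : (fun y : ℝ => max y 0 ^ 2) =ᶠ[nhds x] fun _ => (0:ℝ) := by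
      filter_upwards [Iio_mem_nhds h] with y hy
      simp [max_eq_right (le_of_lt (Set.mem_Iio.mp hy))]
    have : HasDerivAt (fun _ : ℝ => (0:ℝ)) (2 * max x 0) x := by
      simpa [max_eq_right h.le] using hasDerivAt_const x (0:ℝ)
    exact this.congr_of_eventuallyEq hev
  · subst h
    have : HasDerivAt (fun y : ℝ => max y 0 ^ 2) 0 0 := by
      rw [hasDerivAt_iff_isLittleO]
      simp only [sub_zero, smul_zero, sub_zero]
      have : (fun y : ℝ => max y 0 ^ 2 - max 0 0 ^ 2) = fun y : ℝ => max y 0 ^ 2 := by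
        funext y; simp
      rw [this]
      rw [Asymptotics.isLittleO_iff]
      intro c hc
      filter_upwards [Metric.ball_mem_nhds (0:ℝ) hc] with y hy
      simp only [Metric.mem_ball, Real.dist_eq, sub_zero] at hy
      have h1 : |max y 0 ^ 2| ≤ |y| * |y| := by
        rw [abs_of_nonneg (by positivity)]
        have : max y 0 ≤ |y| := le_trans (max_le (le_abs_self y) (abs_nonneg y)) le_rfl
        nlinarith [le_max_right y 0, abs_nonneg y]
      rw [Real.norm_eq_abs, Real.norm_eq_abs]
      calc |max y 0 ^ 2| ≤ |y| * |y| := h1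
        _ ≤ c * |y| := by nlinarith [abs_nonneg y]
    simpa using this
  · have hev : (fun y : ℝ => max y 0 ^ 2) =ᶠ[nhds x] fun y => y ^ 2 := by
      filter_upwards [Ioi_mem_nhds h] with y hy
      simp [max_eq_left (le_of_lt (Set.mem_Ioi.mp hy))]
    have : HasDerivAt (fun y : ℝ => y ^ 2) (2 * max x 0) x := by
      simpa [max_eq_left h.le] using (hasDerivAt_pow 2 x)
    exact this.congr_of_eventuallyEq hev

lemma relu_sq_hasDerivAt_sub (t x : ℝ) :
    HasDerivAt (fun y : ℝ => max (y - t) 0 ^ 2) (2 * max (x - t) 0) x := by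
  have h1 : HasDerivAt (fun y : ℝ => y - t) 1 x := (hasDerivAt_id x).sub_const t
  have := (relu_sq_hasDerivAt (x - t)).comp x h1
  simpa [Function.comp_def] using this

lemma relu_sq_hasDerivAt_sub' (t x : ℝ) :
    HasDerivAt (fun y : ℝ => max (t - y) 0 ^ 2) (-(2 * max (t - x) 0)) x := by
  have h1 : HasDerivAt (fun y : ℝ => t - y) (-1) x := by
    simpa [Pi.sub_def] using (hasDerivAt_const x t).sub (hasDerivAt_id x)
  have := (relu_sq_hasDerivAt (t - x)).comp x h1
  simpa [mul_comm, Function.comp_def] using this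

lemma conv1 (t x y : ℝ) : max (t - x) 0 ^ 2 - 2 * max (t - x) 0 * (y - x) ≤ max (t - y) 0 ^ 2 := by
  rcases le_total (t - x) 0 with h | h
  · rw [max_eq_right h]
    nlinarith [le_max_right (t - y) (0:ℝ), sq_nonneg (max (t - y) 0)]
  · rw [max_eq_left h]
    rcases le_total (t - y) 0 with h2 | h2
    · rw [max_eq_right h2]; nlinarith
    · rw [max_eq_left h2]; nlinarith [sq_nonneg (x - y)]

lemma conv2 (t x y : ℝ) : max (x - t) 0 ^ 2 + 2 * max (x - t) 0 * (y - x) ≤ max (y - t) 0 ^ 2 := by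
  have := conv1 (-t) (-x) (-y)
  simpa [neg_sub, sub_neg_eq_add, add_comm, show ∀ a b : ℝ, -a - -b = b - a from fun a b => by ring] using
    (by
      have h := conv1 (-t) (-x) (-y)
      have e1 : -t - -x = x - t := by ring
      have e2 : -t - -y = y - t := by ring
      have e3 : (-y : ℝ) - -x = -(y - x) := by ring
      rw [e1, e2, e3] at h
      linarith [h] : max (x - t) 0 ^ 2 + 2 * max (x - t) 0 * (y - x) ≤ max (y - t) 0 ^ 2)

set_option maxHeartbeats 1000000 in
theorem fractional_linear_c_positive_bounded (z₀ α β γ₀ γ₁ γ₂ γ₃ : ℝ)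
    (hz₀ : z₀ < 0)
    (hβ0 : 0 < β) (hβ1 : β < 1 - 2 * (Real.exp z₀ - z₀ - 1) / z₀ ^ 2)
    (hγ₃ : γ₃ = -α / (2 * β) - 1 / β)
    (hγ₀ : γ₀ = -α / (2 * β) + z₀ ^ 2 * (1 - 1 / β) / (2 * (Real.exp z₀ - z₀ - 1)))
    (h01 : γ₀ < γ₁) (h12 : γ₁ < γ₂) (h23 : γ₂ < γ₃)
    (G : ℝ → ℝ)
    (hG : ∀ x, G x =
      if x < γ₁ then α * γ₁ + β * γ₁ ^ 2 + (x - γ₁) * (α + 2 * β * γ₁)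
      else if x ≤ γ₂ then α * x + β * x ^ 2
      else α * γ₂ + β * γ₂ ^ 2 + (x - γ₂) * (α + 2 * β * γ₂))
    (G'' : ℝ → ℝ)
    (hG'' : ∀ x, G'' x = Set.indicator (Set.Icc γ₁ γ₂) (fun _ => 2 * β) x)
    (a : ℝ → ℝ) (ha : Measurable a) (hapos : ∀ x, 0 < a x)
    (habd : ∃ M : ℝ, ∀ x, a x ≤ M)
    (c : ℝ → ℝ)
    (hc : ∀ x, c x = (a x ^ 2 / 2) * (G'' x - deriv G x - 2)
        / (G x - G (x + z₀) + (Real.exp z₀ - 1) * deriv G x + z₀ ^ 2)) :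
    (∀ x, 0 < c x) ∧ (∃ M : ℝ, ∀ x, c x ≤ M) := by
  have hβ : β ≠ 0 := ne_of_gt hβ0
  set E : ℝ := Real.exp z₀ - z₀ - 1 with hEdef
  have hE : 0 < E := by
    have := Real.add_one_lt_exp (ne_of_lt hz₀)
    simp only [hEdef]; linarith
  -- closed form for G
  have hGfun : G = fun x => α * x + β * x ^ 2 - β * max (γ₁ - x) 0 ^ 2
      - β * max (x - γ₂) 0 ^ 2 := by
    funext x
    rw [hG x]
    rcases lt_or_ge x γ₁ with h | h
    · rw [if_pos h]
      rw [max_eq_left (show (0:ℝ) ≤ γ₁ - x by linarith), max_eq_right (show x - γ₂ ≤ (0:ℝ) by linarith)]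
      ring
    · rw [if_neg (not_lt.mpr h)]
      rcases le_or_gt x γ₂ with h2 | h2
      · rw [if_pos h2]
        rw [max_eq_right (show γ₁ - x ≤ (0:ℝ) by linarith), max_eq_right (show x - γ₂ ≤ (0:ℝ) by linarith)]
        ring
      · rw [if_neg (not_le.mpr h2)]
        rw [max_eq_right (show γ₁ - x ≤ (0:ℝ) by linarith), max_eq_left (show (0:ℝ) ≤ x - γ₂ by linarith)]
        ring
  -- derivative of G
  set g : ℝ → ℝ := fun x => α + 2 * β * x + 2 * β * max (γ₁ - x) 0
      - 2 * β * max (x - γ₂) 0 with hgdef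
  have hGderiv : ∀ x, HasDerivAt G (g x) x := by
    intro x
    rw [hGfun]
    have h1 : HasDerivAt (fun y : ℝ => α * y) α x := by
      simpa using (hasDerivAt_id x).const_mul α
    have h2 : HasDerivAt (fun y : ℝ => β * y ^ 2) (β * (2 * x)) x := by
      simpa using (hasDerivAt_pow 2 x).const_mul β
    have h3 : HasDerivAt (fun y : ℝ => β * max (γ₁ - y) 0 ^ 2)
        (β * -(2 * max (γ₁ - x) 0)) x := (relu_sq_hasDerivAt_sub' γ₁ x).const_mul β
    have h4 : HasDerivAt (fun y : ℝ => β * max (y - γ₂) 0 ^ 2)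
        (β * (2 * max (x - γ₂) 0)) x := (relu_sq_hasDerivAt_sub γ₂ x).const_mul β
    have := ((h1.add h2).sub h3).sub h4
    have this : HasDerivAt (fun y : ℝ => α * y + β * y ^ 2 - β * max (γ₁ - y) 0 ^ 2 - β * max (y - γ₂) 0 ^ 2)
        (α + β * (2 * x) - β * -(2 * max (γ₁ - x) 0) - β * (2 * max (x - γ₂) 0)) x := this
    convert this using 1
    simp only [hgdef]; ring
  have hderiv : ∀ x, deriv G x = g x := fun x => (hGderiv x).deriv
  -- key constants
  have hα : α = -2 * β * γ₃ - 2 := by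
    rw [hγ₃]; field_simp; ring
  have hγ₀' : 2 * β * E * γ₀ = -α * E + z₀ ^ 2 * (β - 1) := by
    rw [hγ₀]; field_simp
  -- bounds on g
  have hgmin : ∀ x, α + 2 * β * γ₁ ≤ g x := by
    intro x
    simp only [hgdef]
    rcases le_or_gt x γ₂ with h | h
    · rw [max_eq_right (show x - γ₂ ≤ (0:ℝ) by linarith)]
      nlinarith [le_max_left (γ₁ - x) (0:ℝ)]
    · rw [max_eq_left (show (0:ℝ) ≤ x - γ₂ by linarith)]
      nlinarith [le_max_right (γ₁ - x) (0:ℝ)]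
  have hgmax : ∀ x, g x ≤ α + 2 * β * γ₂ := by
    intro x
    simp only [hgdef]
    rcases le_or_gt γ₁ x with h | h
    · rw [max_eq_right (show γ₁ - x ≤ (0:ℝ) by linarith)]
      nlinarith [le_max_left (x - γ₂) (0:ℝ)]
    · rw [max_eq_left (show (0:ℝ) ≤ γ₁ - x by linarith), max_eq_right (show x - γ₂ ≤ (0:ℝ) by linarith)]
      nlinarith
  -- numerator bounds
  set Nlo : ℝ := 2 * β * (γ₃ - γ₂) with hNlodef
  set Nhi : ℝ := 2 * β * (1 + γ₃ - γ₁) with hNhidef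
  have hNlo : 0 < Nlo := by simp only [hNlodef]; nlinarith
  have hNbound : ∀ x, Nlo ≤ G'' x - deriv G x - 2 ∧ G'' x - deriv G x - 2 ≤ Nhi := by
    intro x
    rw [hG'' x, hderiv x]
    rcases em (x ∈ Set.Icc γ₁ γ₂) with h | h
    · rw [Set.indicator_of_mem h]
      have := hgmin x; have := hgmax x
      constructor <;> [nlinarith; nlinarith]
    · rw [Set.indicator_of_notMem h]
      have := hgmin x; have := hgmax x
      constructor <;> [nlinarith; nlinarith]
  -- bracket bound : concavity part
  have e1 : ∀ t, G t = α * t + β * t ^ 2 - β * max (γ₁ - t) 0 ^ 2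
      - β * max (t - γ₂) 0 ^ 2 := fun t => by rw [hGfun]
  have e2 : ∀ t, g t = α + 2 * β * t + 2 * β * max (γ₁ - t) 0
      - 2 * β * max (t - γ₂) 0 := fun t => by rw [hgdef]
  have key : ∀ x y : ℝ, -β * (y - x) ^ 2 ≤
      (α * x + β * x ^ 2 - β * max (γ₁ - x) 0 ^ 2 - β * max (x - γ₂) 0 ^ 2)
      - (α * y + β * y ^ 2 - β * max (γ₁ - y) 0 ^ 2 - β * max (y - γ₂) 0 ^ 2)
      + (y - x) * (α + 2 * β * x + 2 * β * max (γ₁ - x) 0 - 2 * β * max (x - γ₂) 0) := by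
    intro x y
    have h1 := mul_le_mul_of_nonneg_left (conv1 γ₁ x y) hβ0.le
    have h2 := mul_le_mul_of_nonneg_left (conv2 γ₂ x y) hβ0.le
    nlinarith [h1, h2]
  have hbracket : ∀ x, -β * z₀ ^ 2 ≤ G x - G (x + z₀) + z₀ * g x := by
    intro x
    have hk := key x (x + z₀)
    rw [e1 x, e1 (x + z₀), e2 x]
    nlinarith [hk]
  -- denominator lower bound
  set δ : ℝ := 2 * β * E * (γ₁ - γ₀) with hδdef
  have hδ : 0 < δ := by
    simp only [hδdef]
    have := mul_pos (mul_pos (by linarith : (0:ℝ) < 2 * β) hE) (by linarith : (0:ℝ) < γ₁ - γ₀)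
    linarith
  have hD : ∀ x, δ ≤ G x - G (x + z₀) + (Real.exp z₀ - 1) * deriv G x + z₀ ^ 2 := by
    intro x
    rw [hderiv x]
    have hb := hbracket x
    have hgm := hgmin x
    have hEg : E * (α + 2 * β * γ₁) ≤ E * g x :=
      mul_le_mul_of_nonneg_left hgm hE.le
    have hexp : Real.exp z₀ - 1 = E + z₀ := by simp only [hEdef]; ring
    rw [hexp]
    simp only [hδdef]
    nlinarith [hγ₀']
  -- assemble
  obtain ⟨Ma, hMa⟩ := habd
  have hMapos : 0 < Ma := lt_of_lt_of_le (hapos 0) (hMa 0)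
  constructor
  · intro x
    rw [hc x]
    have hN := (hNbound x).1
    have hDx := hD x
    apply div_pos
    · apply mul_pos
      · exact div_pos (pow_pos (hapos x) 2) two_pos
      · linarith
    · linarith
  · refine ⟨(Ma ^ 2 / 2) * Nhi / δ, fun x => ?_⟩
    rw [hc x]
    have hN := hNbound x
    have hDx := hD x
    have hax := hapos x
    have haM := hMa x
    have h1 : a x ^ 2 ≤ Ma ^ 2 := by nlinarith
    have hnum : (a x ^ 2 / 2) * (G'' x - deriv G x - 2) ≤ (Ma ^ 2 / 2) * Nhi := by
      have h2 : (0:ℝ) < G'' x - deriv G x - 2 := lt_of_lt_of_le hNlo hN.1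
      nlinarith [hN.2, h1]
    have hnn : 0 ≤ (Ma ^ 2 / 2) * Nhi := le_trans (by positivity : (0:ℝ) ≤ (a x ^2/2) * Nlo)
      (le_trans (by nlinarith [hN.1] : (a x ^2/2) * Nlo ≤ (a x ^2/2) * (G'' x - deriv G x - 2)) hnum)
    exact div_le_div₀ hnn hnum hδ hDx
end

section
/- Define φ_λ = α(λ² − λ) + ∫(e^{λz} − 1 + (1−e^z)λ)ν₀(dz), χ_λ = β(λ² − λ) + ∫(e^{λz} − 1 + (1−e^z)λ)ν₁(dz), Q₀ = (2α + ∫z²ν₀)/(α + ∫(e^z−1−z)ν₀), Q₁ = 2β + ∫z²ν₁ − Q₀(β + ∫(e^z−1−z)ν₁). Let G₀(x) = −Q₀x and Gₙ(x) = Q₁ (e^{ncx}/φ_{nc}) ∏_{k=1}^{n−1}(−χ_{kc}/φ_{kc}) for n ≥ 1. Then: A₀G₀ = 2α + ∫z²ν₀; A₀G₁ + e^{cx}A₁G₀ = e^{cx}(2β + ∫z²ν₁); and A₀Gₙ + e^{cx}A₁G_{n−1} = 0 for n ≥ 2, where A₀, A₁ are the operators with coefficients (α, ν₀) and (β, ν₁)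 respectively and φ_{nc} ≠ 0 for all n ≥ 1. -/
open MeasureTheory


lemma deriv_expmul (K a : ℝ) :
    deriv (fun x : ℝ => K * Real.exp (a * x)) = fun x => K * a * Real.exp (a * x) := by
  funext x
  have h : HasDerivAt (fun x : ℝ => K * Real.exp (a * x)) (K * (Real.exp (a * x) * (a * 1))) x :=
    (((hasDerivAt_id x).const_mul a).exp).const_mul K
  rw [h.deriv]; ring

lemma deriv_neglin (Q : ℝ) :
    deriv (fun x : ℝ => -Q * x) = fun _ => -Q := by
  funext x
  have h : HasDerivAt (fun x : ℝ => -Q * x) (-Q * 1) x := (hasDerivAt_id x).const_mul (-Q)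
  rw [h.deriv]; ring

lemma Alin (γ Q x : ℝ) (ν : Measure ℝ) :
    γ * (deriv (deriv (fun y : ℝ => -Q * y)) x - deriv (fun y : ℝ => -Q * y) x)
      + ∫ z, ((fun y : ℝ => -Q * y) (x + z) - (fun y : ℝ => -Q * y) x
          + (1 - Real.exp z) * deriv (fun y : ℝ => -Q * y) x) ∂ν
    = Q * (γ + ∫ z, (Real.exp z - 1 - z) ∂ν) := by
  rw [deriv_neglin]
  simp only [deriv_const', deriv_const]
  have h : (fun z : ℝ => (fun y : ℝ => -Q * y) (x + z) - (fun y : ℝ => -Q * y) x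
      + (1 - Real.exp z) * (-Q)) = fun z => Q * (Real.exp z - 1 - z) := by
    funext z; simp only []; ring
  rw [h, MeasureTheory.integral_const_mul]; ring

lemma Aexp (γ K a x : ℝ) (ν : Measure ℝ) :
    γ * (deriv (deriv (fun y : ℝ => K * Real.exp (a * y))) x
        - deriv (fun y : ℝ => K * Real.exp (a * y)) x)
      + ∫ z, ((fun y : ℝ => K * Real.exp (a * y)) (x + z) - (fun y : ℝ => K * Real.exp (a * y)) x
          + (1 - Real.exp z) * deriv (fun y : ℝ => K * Real.exp (a * y)) x) ∂ν
    = K * Real.exp (a * x) * (γ * (a ^ 2 - a)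
        + ∫ z, (Real.exp (a * z) - 1 + (1 - Real.exp z) * a) ∂ν) := by
  rw [deriv_expmul, deriv_expmul]
  have h : (fun z : ℝ => (fun y : ℝ => K * Real.exp (a * y)) (x + z)
      - (fun y : ℝ => K * Real.exp (a * y)) x + (1 - Real.exp z) * (K * a * Real.exp (a * x)))
      = fun z => (K * Real.exp (a * x)) * (Real.exp (a * z) - 1 + (1 - Real.exp z) * a) := by
    funext z
    simp only []
    rw [mul_add, Real.exp_add]
    ring
  rw [h, MeasureTheory.integral_const_mul]; ring

theorem levy_mixture_nested_equations (α β c : ℝ) (ν₀ ν₁ : Measure ℝ)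
    (hint₀ : ∀ l : ℝ, Integrable (fun z => Real.exp (l * z) - 1 + (1 - Real.exp z) * l) ν₀)
    (hint₁ : ∀ l : ℝ, Integrable (fun z => Real.exp (l * z) - 1 + (1 - Real.exp z) * l) ν₁)
    (hz2₀ : Integrable (fun z => z ^ 2) ν₀) (hz2₁ : Integrable (fun z => z ^ 2) ν₁)
    (hexp₀ : Integrable (fun z => Real.exp z - 1 - z) ν₀)
    (hexp₁ : Integrable (fun z => Real.exp z - 1 - z) ν₁)
    (φ χ : ℝ → ℝ)
    (hφ : ∀ l : ℝ, φ l = α * (l ^ 2 - l)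
        + ∫ z, (Real.exp (l * z) - 1 + (1 - Real.exp z) * l) ∂ν₀)
    (hχ : ∀ l : ℝ, χ l = β * (l ^ 2 - l)
        + ∫ z, (Real.exp (l * z) - 1 + (1 - Real.exp z) * l) ∂ν₁)
    (hφne : ∀ n : ℕ, 1 ≤ n → φ (n * c) ≠ 0)
    (hden : α + ∫ z, (Real.exp z - 1 - z) ∂ν₀ ≠ 0)
    (Q₀ Q₁ : ℝ)
    (hQ₀ : Q₀ = (2 * α + ∫ z, z ^ 2 ∂ν₀) / (α + ∫ z, (Real.exp z - 1 - z) ∂ν₀))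
    (hQ₁ : Q₁ = 2 * β + (∫ z, z ^ 2 ∂ν₁)
        - Q₀ * (β + ∫ z, (Real.exp z - 1 - z) ∂ν₁))
    (Gs : ℕ → ℝ → ℝ)
    (hG0 : ∀ x, Gs 0 x = -Q₀ * x)
    (hGn : ∀ n : ℕ, 1 ≤ n → ∀ x, Gs n x =
      Q₁ * (Real.exp ((n : ℝ) * c * x) / φ ((n : ℝ) * c))
        * ∏ k ∈ Finset.Icc 1 (n - 1), (-χ ((k : ℝ) * c) / φ ((k : ℝ) * c)))
    (A₀ A₁ : (ℝ → ℝ) → ℝ → ℝ)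
    (hA₀ : ∀ g x, A₀ g x = α * (deriv (deriv g) x - deriv g x)
        + ∫ z, (g (x + z) - g x + (1 - Real.exp z) * deriv g x) ∂ν₀)
    (hA₁ : ∀ g x, A₁ g x = β * (deriv (deriv g) x - deriv g x)
        + ∫ z, (g (x + z) - g x + (1 - Real.exp z) * deriv g x) ∂ν₁) :
    (∀ x, A₀ (Gs 0) x = 2 * α + ∫ z, z ^ 2 ∂ν₀) ∧
    (∀ x, A₀ (Gs 1) x + Real.exp (c * x) * A₁ (Gs 0) x
        = Real.exp (c * x) * (2 * β + ∫ z, z ^ 2 ∂ν₁)) ∧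
    (∀ n : ℕ, 2 ≤ n → ∀ x,
        A₀ (Gs n) x + Real.exp (c * x) * A₁ (Gs (n - 1)) x = 0) := by
  have hG0' : Gs 0 = fun y : ℝ => -Q₀ * y := funext hG0
  have hGfun : ∀ n : ℕ, 1 ≤ n → Gs n = fun y : ℝ =>
      (Q₁ / φ ((n : ℝ) * c)
        * ∏ k ∈ Finset.Icc 1 (n - 1), (-χ ((k : ℝ) * c) / φ ((k : ℝ) * c)))
      * Real.exp ((n : ℝ) * c * y) := by
    intro n hn; funext y; rw [hGn n hn]; ring
  refine ⟨?_, ?_, ?_⟩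
  · intro x
    rw [hA₀, hG0', Alin, hQ₀, div_mul_cancel₀ _ hden]
  · intro x
    rw [hA₀, hA₁, hG0', hGfun 1 le_rfl, Aexp, Alin, ← hφ]
    have hφc := hφne 1 le_rfl
    have h10 : Finset.Icc 1 0 = (∅ : Finset ℕ) := rfl
    simp only [h10, Finset.prod_empty, mul_one, Nat.cast_one, one_mul] at *
    rw [hQ₁]
    field_simp
    ring
  · intro n hn x
    obtain ⟨m, rfl⟩ : ∃ m, n = m + 2 := ⟨n - 2, by omega⟩
    have h1 : m + 2 - 1 = m + 1 := rfl
    have h2 : m + 1 - 1 = m := rfl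
    rw [hA₀, hA₁, hGfun (m + 2) (by omega), h1, hGfun (m + 1) (by omega), h2, Aexp, Aexp,
      ← hφ, ← hχ]
    have hprod : (∏ k ∈ Finset.Icc 1 (m + 1), (-χ ((k : ℝ) * c) / φ ((k : ℝ) * c)))
        = (∏ k ∈ Finset.Icc 1 m, (-χ ((k : ℝ) * c) / φ ((k : ℝ) * c)))
          * (-χ (((m + 1 : ℕ) : ℝ) * c) / φ (((m + 1 : ℕ) : ℝ) * c)) :=
      Finset.prod_Icc_succ_top (by omega) _
    have hA := hφne (m + 2) (by omega)
    have hB := hφne (m + 1) (by omega)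
    have hE : Real.exp (c * x) = Real.exp (((m + 2 : ℕ) : ℝ) * c * x)
        / Real.exp (((m + 1 : ℕ) : ℝ) * c * x) := by
      rw [eq_div_iff (Real.exp_ne_zero _), ← Real.exp_add]
      congr 1
      push_cast
      ring
    rw [hprod, hE]
    set P := ∏ k ∈ Finset.Icc 1 m, (-χ ((k : ℝ) * c) / φ ((k : ℝ) * c)) with hP
    push_cast at hA hB ⊢
    ring_nf at hA hB ⊢
    have hA' : φ (c * 2 + c * (m:ℝ)) ≠ 0 := by
      rwa [show c * 2 + c * (m:ℝ) = m * c + c * 2 by ring]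
    field_simp [hA, hB, hA']
    ring_nf
    rw [mul_inv_cancel_right₀ hA']
    ring
end
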